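/- Let (H, μ_H, Δ_H, α_H) be a Hom-bialgebra and let (M, α_M), (N, α_N) be H-comodules with structure maps δ_M : M → H ⊗ M and δ_N : N → H ⊗ N. Then δ_{MN} = (μ_H ⊗ id_{M⊗N}) ∘ (id_H ⊗ τ_{H,M} ⊗ id_N) ∘ (δ_M ⊗ δ_N) : M ⊗ N → H ⊗ M ⊗ N is the structure map of an H-comodule structure on (M ⊗ N, α_M ⊗ α_N); i.e., δ_{MN} ∘ (α_M ⊗ α_N) = (α_H ⊗ α_M ⊗ α_N) ∘ δ_{MN} and (α_H ⊗ δ_{MN}) ∘ δ_{MN} = (Δ_H ⊗ α_M ⊗ α_N) ∘ δ_{MN}. -/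
import Mathlib


open TensorProduct

/-- The tensor product of two comodules over a Hom-bialgebra is a comodule. -/
theorem stmt_2 {F : Type*} [Field F] {H M N : Type*}
    [AddCommGroup H] [Module F H] [AddCommGroup M] [Module F M]
    [AddCommGroup N] [Module F N]
    (μH : H ⊗[F] H →ₗ[F] H) (ΔH : H →ₗ[F] H ⊗[F] H) (αH : H →ₗ[F] H)
    (αM : M →ₗ[F] M) (αN : N →ₗ[F] N)
    (δM : M →ₗ[F] H ⊗[F] M) (δN : N →ₗ[F] H ⊗[F] N)
    -- (H, μ_H, α_H) is a Hom-associative algebra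
    (hmult : αH ∘ₗ μH = μH ∘ₗ TensorProduct.map αH αH)
    (hassoc : μH ∘ₗ TensorProduct.map αH μH ∘ₗ (TensorProduct.assoc F H H H).toLinearMap =
      μH ∘ₗ TensorProduct.map μH αH)
    -- (H, Δ_H, α_H) is a Hom-coassociative coalgebra
    (hcm : ΔH ∘ₗ αH = TensorProduct.map αH αH ∘ₗ ΔH)
    (hca : TensorProduct.map αH ΔH ∘ₗ ΔH =
      (TensorProduct.assoc F H H H).toLinearMap ∘ₗ TensorProduct.map ΔH αH ∘ₗ ΔH)
    -- Δ_H is multiplicative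
    (hbi : ΔH ∘ₗ μH = TensorProduct.map μH μH ∘ₗ
      (TensorProduct.tensorTensorTensorComm F H H H H).toLinearMap ∘ₗ
      TensorProduct.map ΔH ΔH)
    -- (M, α_M, δ_M) and (N, α_N, δ_N) are H-comodules
    (hδMm : δM ∘ₗ αM = TensorProduct.map αH αM ∘ₗ δM)
    (hδM : TensorProduct.map αH δM ∘ₗ δM =
      (TensorProduct.assoc F H H M).toLinearMap ∘ₗ TensorProduct.map ΔH αM ∘ₗ δM)
    (hδNm : δN ∘ₗ αN = TensorProduct.map αH αN ∘ₗ δN)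
    (hδN : TensorProduct.map αH δN ∘ₗ δN =
      (TensorProduct.assoc F H H N).toLinearMap ∘ₗ TensorProduct.map ΔH αN ∘ₗ δN) :
    -- δ_{MN} is an H-comodule structure on (M ⊗ N, α_M ⊗ α_N)
    (TensorProduct.map μH LinearMap.id ∘ₗ
        (TensorProduct.tensorTensorTensorComm F H M H N).toLinearMap ∘ₗ
        TensorProduct.map δM δN) ∘ₗ TensorProduct.map αM αN =
      TensorProduct.map αH (TensorProduct.map αM αN) ∘ₗ
        (TensorProduct.map μH LinearMap.id ∘ₗ
          (TensorProduct.tensorTensorTensorComm F H M H N).toLinearMap ∘ₗ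
          TensorProduct.map δM δN) ∧
    TensorProduct.map αH
        (TensorProduct.map μH LinearMap.id ∘ₗ
          (TensorProduct.tensorTensorTensorComm F H M H N).toLinearMap ∘ₗ
          TensorProduct.map δM δN) ∘ₗ
        (TensorProduct.map μH LinearMap.id ∘ₗ
          (TensorProduct.tensorTensorTensorComm F H M H N).toLinearMap ∘ₗ
          TensorProduct.map δM δN) =
      (TensorProduct.assoc F H H (M ⊗[F] N)).toLinearMap ∘ₗ
        TensorProduct.map ΔH (TensorProduct.map αM αN) ∘ₗ
        (TensorProduct.map μH LinearMap.id ∘ₗ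
          (TensorProduct.tensorTensorTensorComm F H M H N).toLinearMap ∘ₗ
          TensorProduct.map δM δN) := by
  have hmult' : ∀ a b : H, αH (μH (a ⊗ₜ[F] b)) = μH (αH a ⊗ₜ[F] αH b) := by
    intro a b
    simpa using DFunLike.congr_fun hmult (a ⊗ₜ[F] b)
  have hbi' : ∀ a b : H, ΔH (μH (a ⊗ₜ[F] b)) =
      TensorProduct.map μH μH
        ((TensorProduct.tensorTensorTensorComm F H H H H) (ΔH a ⊗ₜ[F] ΔH b)) := by
    intro a b
    simpa using DFunLike.congr_fun hbi (a ⊗ₜ[F] b)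
  set Φ : (H ⊗[F] (H ⊗[F] M)) ⊗[F] (H ⊗[F] (H ⊗[F] N)) →ₗ[F]
      H ⊗[F] (H ⊗[F] (M ⊗[F] N)) :=
    TensorProduct.map μH
        (TensorProduct.map μH LinearMap.id ∘ₗ
          (TensorProduct.tensorTensorTensorComm F H M H N).toLinearMap) ∘ₗ
      (TensorProduct.tensorTensorTensorComm F H (H ⊗[F] M) H (H ⊗[F] N)).toLinearMap
    with hΦ
  constructor
  · apply TensorProduct.ext'
    intro m n
    have h1 : δM (αM m) = TensorProduct.map αH αM (δM m) := DFunLike.congr_fun hδMm m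
    have h2 : δN (αN n) = TensorProduct.map αH αN (δN n) := DFunLike.congr_fun hδNm n
    simp only [LinearMap.comp_apply, TensorProduct.map_tmul, h1, h2]
    generalize δM m = x
    generalize δN n = y
    induction x using TensorProduct.induction_on with
    | zero => simp
    | tmul a m' =>
      induction y using TensorProduct.induction_on with
      | zero => simp
      | tmul b n' => simp [hmult']
      | add y₁ y₂ ih₁ ih₂ => simp only [TensorProduct.tmul_add, map_add, ih₁, ih₂]
    | add x₁ x₂ ih₁ ih₂ => simp only [TensorProduct.add_tmul, map_add, ih₁, ih₂]
  · apply TensorProduct.ext'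
    intro m n
    have key1 : ∀ (x : H ⊗[F] M) (y : H ⊗[F] N),
        TensorProduct.map αH
          (TensorProduct.map μH LinearMap.id ∘ₗ
            (TensorProduct.tensorTensorTensorComm F H M H N).toLinearMap ∘ₗ
            TensorProduct.map δM δN)
          (TensorProduct.map μH LinearMap.id
            ((TensorProduct.tensorTensorTensorComm F H M H N) (x ⊗ₜ[F] y))) =
        Φ (TensorProduct.map αH δM x ⊗ₜ[F] TensorProduct.map αH δN y) := by
      intro x y
      induction x using TensorProduct.induction_on with
      | zero => simp
      | tmul a m' =>
        induction y using TensorProduct.induction_on with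
        | zero => simp
        | tmul b n' => simp [hΦ, hmult']
        | add y₁ y₂ ih₁ ih₂ => simp only [TensorProduct.tmul_add, map_add, ih₁, ih₂]
      | add x₁ x₂ ih₁ ih₂ => simp only [TensorProduct.add_tmul, map_add, ih₁, ih₂]
    have key2 : ∀ (x : H ⊗[F] M) (y : H ⊗[F] N),
        (TensorProduct.assoc F H H (M ⊗[F] N))
          (TensorProduct.map ΔH (TensorProduct.map αM αN)
            (TensorProduct.map μH LinearMap.id
              ((TensorProduct.tensorTensorTensorComm F H M H N) (x ⊗ₜ[F] y)))) =
        Φ ((TensorProduct.assoc F H H M) (TensorProduct.map ΔH αM x) ⊗ₜ[F]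
           (TensorProduct.assoc F H H N) (TensorProduct.map ΔH αN y)) := by
      intro x y
      induction x using TensorProduct.induction_on with
      | zero => simp
      | tmul a m' =>
        induction y using TensorProduct.induction_on with
        | zero => simp
        | tmul b n' =>
          simp only [TensorProduct.tensorTensorTensorComm_tmul, TensorProduct.map_tmul,
            hbi']
          generalize ΔH a = u
          generalize ΔH b = v
          induction u using TensorProduct.induction_on with
          | zero => simp
          | tmul a₁ a₂ =>
            induction v using TensorProduct.induction_on with
            | zero => simp
            | tmul b₁ b₂ => simp [hΦ]
            | add v₁ v₂ ih₁ ih₂ => simp only [TensorProduct.tmul_add,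
                TensorProduct.add_tmul, map_add, ih₁, ih₂]
          | add u₁ u₂ ih₁ ih₂ => simp only [TensorProduct.tmul_add,
              TensorProduct.add_tmul, map_add, ih₁, ih₂]
        | add y₁ y₂ ih₁ ih₂ => simp only [TensorProduct.tmul_add, map_add, ih₁, ih₂]
      | add x₁ x₂ ih₁ ih₂ => simp only [TensorProduct.add_tmul, map_add, ih₁, ih₂]
    have hM' : TensorProduct.map αH δM (δM m) =
        (TensorProduct.assoc F H H M) (TensorProduct.map ΔH αM (δM m)) := by
      simpa using DFunLike.congr_fun hδM m
    have hN' : TensorProduct.map αH δN (δN n) =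
        (TensorProduct.assoc F H H N) (TensorProduct.map ΔH αN (δN n)) := by
      simpa using DFunLike.congr_fun hδN n
    simp only [LinearMap.comp_apply, TensorProduct.map_tmul, LinearMap.coe_comp,
      LinearEquiv.coe_coe, Function.comp_apply]
    rw [key1, key2, hM', hN']
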